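/- Let F ∈ ℂ[x₁,…,xₙ] be a homogeneous form of degree d > 1 that is irreducible over ℂ, and suppose that for indices i ≠ j the mixed second partial derivative ∂²F/∂xᵢ∂xⱼ is identically zero, while xᵢ·∂²F/∂xᵢ² + ∂F/∂xᵢ and xⱼ·∂²F/∂xⱼ² + ∂F/∂xⱼ are both non-zero polynomials. Then F does not divide the polynomial 𝔊_{i,j}(x) = (xᵢ·∂²F/∂xᵢ²(x) + ∂F/∂xᵢ(x))·(xⱼ·∂²F/∂xⱼ²(x) + ∂F/∂xⱼ(x)) − xᵢxⱼ·(∂²F/∂xᵢ∂xⱼ(x))². -/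

import Mathlib

open MvPolynomial

lemma degree_sub_single {σ : Type*} (m : σ →₀ ℕ) (i : σ) (hmi : m i ≠ 0) :
    (m - Finsupp.single i 1).degree + 1 = m.degree := by
  classical
  have h : (m - Finsupp.single i 1) + Finsupp.single i 1 = m := by
    ext k
    by_cases hk : k = i
    · subst hk
      simp only [Finsupp.add_apply, Finsupp.tsub_apply, Finsupp.single_eq_same]
      omega
    · simp [Finsupp.single_eq_of_ne' (Ne.symm hk)]
  have := congrArg Finsupp.degree h
  rw [Finsupp.degree_eq_weight_one] at this ⊢
  rw [map_add] at this
  simpa [Finsupp.weight_apply, Finsupp.sum_single_index] using this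

lemma isHomogeneous_pderiv {σ : Type*} {R : Type*} [CommRing R] {F : MvPolynomial σ R} {d : ℕ}
    (hF : F.IsHomogeneous d) (i : σ) : (pderiv i F).IsHomogeneous (d - 1) := by
  classical
  rw [F.as_sum, map_sum]
  apply IsHomogeneous.sum
  intro m hm
  rw [pderiv_monomial]
  by_cases h : coeff m F * (m i : R) = 0
  · rw [h, map_zero]; exact isHomogeneous_zero _ _ _
  · apply isHomogeneous_monomial
    have hmi : m i ≠ 0 := by
      intro h0
      apply h
      rw [h0]; simp
    have hdm : m.degree = d := by
      by_contra hne
      exact mem_support_iff.mp hm (hF.coeff_eq_zero hne)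
    have := degree_sub_single m i hmi
    omega

lemma homogeneousComponent_of_isHomogeneous {σ : Type*} {R : Type*} [CommRing R]
    {φ : MvPolynomial σ R} {m : ℕ} (h : φ.IsHomogeneous m) (k : ℕ) :
    homogeneousComponent k φ = if k = m then φ else 0 := by
  ext d
  rw [coeff_homogeneousComponent]
  split_ifs with h1 h2 h2
  · rfl
  · rw [coeff_zero]
    exact h.coeff_eq_zero (by rw [h1]; exact h2)
  · exact (h.coeff_eq_zero (h2 ▸ h1)).symm
  · simp

lemma not_dvd_of_isHomogeneous_lt {σ : Type*} {F A : MvPolynomial σ ℂ} {d e : ℕ}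
    (hF : F.IsHomogeneous d) (hA : A.IsHomogeneous e) (hA0 : A ≠ 0) (hlt : e < d) :
    ¬ F ∣ A := by
  rintro ⟨c, rfl⟩
  have hF0 : F ≠ 0 := fun h => hA0 (by simp [h])
  have hc0 : c ≠ 0 := fun h => hA0 (by simp [h])
  -- pick the homogeneous component of c at its total degree
  set k := c.totalDegree with hk
  have hck : homogeneousComponent k c ≠ 0 := by
    obtain ⟨m, hm, hmd⟩ := Finset.exists_mem_eq_sup c.support
      (Finset.nonempty_iff_ne_empty.mpr (by rwa [Ne, MvPolynomial.support_eq_empty])) (fun m => m.sum fun _ e => e)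
    intro h0
    have : coeff m (homogeneousComponent k c) = coeff m c := by
      rw [coeff_homogeneousComponent, if_pos]
      show m.degree = k
      rw [hk, MvPolynomial.totalDegree, hmd]
      rfl
    rw [h0, coeff_zero] at this
    exact mem_support_iff.mp hm this.symm
  -- the (d+k)-component of F * c is F * (component k c), but F*c has degree e < d+k
  have h1 : homogeneousComponent (d + k) (F * c) = 0 := by
    apply homogeneousComponent_eq_zero
    calc (F * c).totalDegree ≤ e := hA.totalDegree_le
    _ < d + k := by omega
  have h2 : homogeneousComponent (d + k) (F * c) = F * homogeneousComponent k c := by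
    conv_lhs => rw [← c.sum_homogeneousComponent, Finset.mul_sum, map_sum]
    rw [Finset.sum_eq_single k]
    · have : (F * homogeneousComponent k c).IsHomogeneous (d + k) :=
        hF.mul (homogeneousComponent_isHomogeneous k c)
      rw [homogeneousComponent_of_isHomogeneous this, if_pos rfl]
    · intro b _ hb
      have : (F * homogeneousComponent b c).IsHomogeneous (d + b) :=
        hF.mul (homogeneousComponent_isHomogeneous b c)
      rw [homogeneousComponent_of_isHomogeneous this, if_neg (by omega)]
    · intro h
      simp at h
      exact absurd h (by omega)
  rw [h1] at h2
  exact hck (by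
    rcases mul_eq_zero.mp h2.symm with h | h
    · exact absurd h hF0
    · exact h)

/-- For an irreducible homogeneous form `F` of degree `d > 1` over `ℂ` with
vanishing mixed partial `∂²F/∂xᵢ∂xⱼ ≡ 0` and with `xᵢ·∂²F/∂xᵢ² + ∂F/∂xᵢ` and
`xⱼ·∂²F/∂xⱼ² + ∂F/∂xⱼ` both non-zero, `F` does not divide
`𝔊_{i,j} = (xᵢ·∂²F/∂xᵢ² + ∂F/∂xᵢ)(xⱼ·∂²F/∂xⱼ² + ∂F/∂xⱼ) − xᵢxⱼ(∂²F/∂xᵢ∂xⱼ)²`. -/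
theorem stmt3 (n d : ℕ) (F : MvPolynomial (Fin n) ℂ) (i j : Fin n)
    (hd : 1 < d) (hF : F.IsHomogeneous d) (hirr : Irreducible F) (hij : i ≠ j)
    (hmixed : pderiv i (pderiv j F) = 0)
    (hi : X i * pderiv i (pderiv i F) + pderiv i F ≠ 0)
    (hj : X j * pderiv j (pderiv j F) + pderiv j F ≠ 0) :
    ¬ F ∣ ((X i * pderiv i (pderiv i F) + pderiv i F) *
            (X j * pderiv j (pderiv j F) + pderiv j F) -
          X i * X j * (pderiv i (pderiv j F)) ^ 2) := by
  intro hdvd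
  rw [hmixed, zero_pow two_ne_zero, mul_zero, sub_zero] at hdvd
  have hprime : Prime F := UniqueFactorizationMonoid.irreducible_iff_prime.mp hirr
  have key : ∀ k : Fin n, (X k * pderiv k (pderiv k F) + pderiv k F).IsHomogeneous (d - 1) := by
    intro k
    have h1 : (pderiv k F).IsHomogeneous (d - 1) := isHomogeneous_pderiv hF k
    have h2 : (pderiv k (pderiv k F)).IsHomogeneous (d - 1 - 1) := isHomogeneous_pderiv h1 k
    have h3 : ((X k : MvPolynomial (Fin n) ℂ) * pderiv k (pderiv k F)).IsHomogeneous
        (1 + (d - 1 - 1)) := (isHomogeneous_X ℂ k).mul h2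
    by_cases hz : pderiv k (pderiv k F) = 0
    · rw [hz, mul_zero, zero_add]; exact h1
    · have : 1 + (d - 1 - 1) = d - 1 := by
        -- if the second derivative is nonzero then d ≥ 2 and d-1 ≥ 1
        omega
      exact (this ▸ h3).add h1
  rcases hprime.2.2 _ _ hdvd with h | h
  · exact not_dvd_of_isHomogeneous_lt hF (key i) hi (by omega) h
  · exact not_dvd_of_isHomogeneous_lt hF (key j) hj (by omega) h
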